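/- Let M, N be positive integers with N ≥ 0.7·M and M ≤ 16N/9. Let g_1, …, g_N be independent random vectors in ℝ^s with common mean μ, let ḡ = (1/N)·∑_{j=1}^N g_j, and let a, b, p₀ > 0 be such that P(‖ḡ − μ‖ > a) ≤ p₀ and P(‖g_j − μ‖ > b) ≤ 1/9 for every j. Then the probability that fewer than M/2 indices j ∈ {1, …, N} satisfy ‖g_j − ḡ‖ ≤ a + b is at most p₀ + exp(−2N·(8/9 − M/(2N))²). -/

import Mathlib

open MeasureTheory ProbabilityTheory

namespace BTARDAux
open Real Set

/-- derivative of φ -/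
lemma hasDerivAt_phi {x : ℝ} (hx : 0 < x) (hx1 : x < 1) :
    HasDerivAt (fun m : ℝ => log m - log (8 * (1 - m)) + 4 * (8/9 - m))
      (x⁻¹ + (1 - x)⁻¹ - 4) x := by
  have h1 : (0:ℝ) < 1 - x := by linarith
  have hinner : HasDerivAt (fun m : ℝ => 8 * (1 - m)) (-8) x := by
    have : HasDerivAt (fun m : ℝ => 1 - m) (-1) x := (hasDerivAt_id x).const_sub 1
    simpa using this.const_mul 8
  have hlog2 : HasDerivAt (fun m : ℝ => log (8 * (1 - m))) ((8 * (1 - x))⁻¹ * (-8)) x :=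
    (Real.hasDerivAt_log (by positivity)).comp x hinner
  have hlog1 : HasDerivAt (fun m : ℝ => log m) x⁻¹ x := Real.hasDerivAt_log hx.ne'
  have hlin : HasDerivAt (fun m : ℝ => 4 * (8/9 - m)) (-4) x := by
    have : HasDerivAt (fun m : ℝ => 8/9 - m) (-1) x := (hasDerivAt_id x).const_sub (8/9)
    simpa using this.const_mul 4
  have := (hlog1.sub hlog2).add hlin
  refine this.congr_deriv ?_
  field_simp
  ring

lemma phi_nonpos {x : ℝ} (hx : 0 < x) (hx8 : x ≤ 8/9) :
    log x - log (8 * (1 - x)) + 4 * (8/9 - x) ≤ 0 := by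
  set φ : ℝ → ℝ := fun m => log m - log (8 * (1 - m)) + 4 * (8/9 - m) with hφ
  have hmono : MonotoneOn φ (Ioo (0:ℝ) 1) := by
    have hint : interior (Ioo (0:ℝ) 1) = Ioo (0:ℝ) 1 := interior_Ioo
    refine monotoneOn_of_deriv_nonneg (convex_Ioo 0 1)
      (fun y hy => ((hasDerivAt_phi hy.1 hy.2).continuousAt).continuousWithinAt)
      (fun y hy => ?_) (fun y hy => ?_)
    · rw [hint] at hy
      exact (hasDerivAt_phi hy.1 hy.2).differentiableAt.differentiableWithinAt
    · rw [hint] at hy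
      rw [(hasDerivAt_phi hy.1 hy.2).deriv]
      have h1 : (0:ℝ) < 1 - y := by linarith [hy.2]
      have hy0 : y ≠ 0 := hy.1.ne'
      have h1' : (1:ℝ) - y ≠ 0 := h1.ne'
      have e : y⁻¹ + (1 - y)⁻¹ = 1 / (y * (1 - y)) := by
        rw [inv_eq_one_div, inv_eq_one_div, div_add_div _ _ hy0 h1']
        have : 1 * (1 - y) + y * 1 = 1 := by ring
        rw [this]
      have key : y * (1 - y) ≤ 1/4 := by nlinarith [sq_nonneg (1 - 2*y)]
      have pos : (0:ℝ) < y * (1 - y) := mul_pos hy.1 h1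
      have h4 : (4:ℝ) ≤ 1 / (y * (1 - y)) := by
        rw [le_div_iff₀ pos]; linarith
      linarith [e, h4]
  have h89 : (8/9 : ℝ) ∈ Ioo (0:ℝ) 1 := by norm_num
  have hxm : x ∈ Ioo (0:ℝ) 1 := ⟨hx, by linarith⟩
  have hval : φ (8/9) = 0 := by
    have h8 : (8:ℝ) * (1 - 8/9) = 8/9 := by norm_num
    simp [hφ, h8]
  have h2 : φ x ≤ 0 := le_of_le_of_eq (hmono hxm h89 hx8) hval
  simpa [hφ] using h2

lemma hasDerivAt_hfun {x : ℝ} (hx : 0 < x) (hx1 : x < 1) :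
    HasDerivAt (fun m : ℝ => m * log m - m * log (8 * (1 - m)) + log 9 + log (1 - m)
        - 2 * (8/9 - m)^2)
      (log x - log (8 * (1 - x)) + 4 * (8/9 - x)) x := by
  have h1 : (0:ℝ) < 1 - x := by linarith
  have hinner : HasDerivAt (fun m : ℝ => 8 * (1 - m)) (-8) x := by
    have : HasDerivAt (fun m : ℝ => 1 - m) (-1) x := (hasDerivAt_id x).const_sub 1
    simpa using this.const_mul 8
  have hinner1 : HasDerivAt (fun m : ℝ => 1 - m) (-1) x := (hasDerivAt_id x).const_sub 1
  have hlogm : HasDerivAt (fun m : ℝ => log m) x⁻¹ x := Real.hasDerivAt_log hx.ne'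
  have hlog2 : HasDerivAt (fun m : ℝ => log (8 * (1 - m))) ((8 * (1 - x))⁻¹ * (-8)) x :=
    (Real.hasDerivAt_log (by positivity)).comp x hinner
  have hlog3 : HasDerivAt (fun m : ℝ => log (1 - m)) ((1 - x)⁻¹ * (-1)) x :=
    (Real.hasDerivAt_log h1.ne').comp x hinner1
  have t1 : HasDerivAt (fun m : ℝ => m * log m) (1 * log x + x * x⁻¹) x :=
    (hasDerivAt_id x).mul hlogm
  have t2 : HasDerivAt (fun m : ℝ => m * log (8 * (1 - m)))
      (1 * log (8 * (1 - x)) + x * ((8 * (1 - x))⁻¹ * (-8))) x :=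
    (hasDerivAt_id x).mul hlog2
  have t4 : HasDerivAt (fun m : ℝ => 2 * (8/9 - m)^2)
      (2 * ((2 : ℕ) * (8/9 - x)^1 * (-1))) x := by
    have : HasDerivAt (fun m : ℝ => (8/9 - m)^2) ((2 : ℕ) * (8/9 - x)^1 * (-1)) x :=
      ((hasDerivAt_id x).const_sub (8/9)).pow 2
    exact this.const_mul 2
  have := (((t1.sub t2).add_const (log 9)).add hlog3).sub t4
  refine this.congr_deriv ?_
  have hx0 : x ≠ 0 := hx.ne'
  have h1' : (1:ℝ) - x ≠ 0 := h1.ne'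
  field_simp
  ring

lemma key_entropy_ineq {m : ℝ} (hm : 0 < m) (hm8 : m ≤ 8/9) :
    0 ≤ m * log m - m * log (8 * (1 - m)) + log 9 + log (1 - m) - 2 * (8/9 - m)^2 := by
  set h : ℝ → ℝ := fun m => m * log m - m * log (8 * (1 - m)) + log 9 + log (1 - m)
      - 2 * (8/9 - m)^2 with hh
  have hanti : AntitoneOn h (Ioc (0:ℝ) (8/9)) := by
    have hint : interior (Ioc (0:ℝ) (8/9)) = Ioo (0:ℝ) (8/9) := interior_Ioc
    refine antitoneOn_of_deriv_nonpos (convex_Ioc 0 (8/9))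
      (fun y hy => ((hasDerivAt_hfun hy.1 (by linarith [hy.2] : y < 1)).continuousAt).continuousWithinAt)
      (fun y hy => ?_) (fun y hy => ?_)
    · rw [hint] at hy
      exact (hasDerivAt_hfun hy.1 (by linarith [hy.2])).differentiableAt.differentiableWithinAt
    · rw [hint] at hy
      rw [(hasDerivAt_hfun hy.1 (by linarith [hy.2])).deriv]
      exact phi_nonpos hy.1 hy.2.le
  have h89 : (8/9 : ℝ) ∈ Ioc (0:ℝ) (8/9) := by norm_num
  have hmm : m ∈ Ioc (0:ℝ) (8/9) := ⟨hm, hm8⟩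
  have hval : h (8/9) = 0 := by
    have h8 : (8:ℝ) * (1 - 8/9) = 8/9 := by norm_num
    have h9 : (1:ℝ) - 8/9 = 9⁻¹ := by norm_num
    show (8/9 : ℝ) * log (8/9) - 8/9 * log (8 * (1 - 8/9)) + log 9 + log (1 - 8/9)
        - 2 * (8/9 - 8/9)^2 = 0
    rw [h8, h9, Real.log_inv]
    ring
  have h2 : 0 ≤ h m := hval ▸ hanti hmm h89 hm8
  simpa [hh] using h2

end BTARDAux

open BTARDAux

set_option maxHeartbeats 1000000

noncomputable section

/-- False-alarm bound for Verification 3 of BTARD: if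
`P(‖ḡ − μ‖ > a) ≤ p₀` and each `P(‖g_j − μ‖ > b) ≤ 1/9`, then the probability that fewer than
`M/2` of the indices `j` satisfy `‖g_j − ḡ‖ ≤ a + b` is at most
`p₀ + exp(−2N·(8/9 − M/(2N))²)`. -/
theorem verification3_false_alarm
    {Ω : Type*} [MeasurableSpace Ω] (P : Measure Ω) [IsProbabilityMeasure P]
    {s : ℕ} (M N : ℕ) (hM : 0 < M) (hN : 0 < N)
    (hNM : (0.7 : ℝ) * M ≤ N) (hMN : (M : ℝ) ≤ 16 * N / 9)
    (g : Fin N → Ω → EuclideanSpace ℝ (Fin s)) (μvec : EuclideanSpace ℝ (Fin s))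
    (a b p₀ : ℝ) (ha : 0 < a) (hb : 0 < b) (hp₀ : 0 < p₀)
    (hmeas : ∀ j, Measurable (g j))
    (hindep : iIndepFun g P)
    (hint : ∀ j, Integrable (g j) P)
    (hmean : ∀ j, ∫ ω, g j ω ∂P = μvec)
    (hbar : P {ω | a < ‖(N : ℝ)⁻¹ • (∑ j : Fin N, g j ω) - μvec‖} ≤ ENNReal.ofReal p₀)
    (heach : ∀ j, P {ω | b < ‖g j ω - μvec‖} ≤ ENNReal.ofReal (1 / 9)) :
    P {ω | ((Set.ncard {j : Fin N | ‖g j ω - (N : ℝ)⁻¹ • (∑ i : Fin N, g i ω)‖ ≤ a + b} : ℝ)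
        < (M : ℝ) / 2)}
      ≤ ENNReal.ofReal (p₀ + Real.exp (-2 * N * (8 / 9 - M / (2 * N)) ^ 2)) := by
  classical
  have hNpos : (0:ℝ) < N := Nat.cast_pos.mpr hN
  have hMpos : (0:ℝ) < M := Nat.cast_pos.mpr hM
  set m : ℝ := (M : ℝ) / (2 * (N : ℝ)) with hm_def
  have hm : 0 < m := by positivity
  have hm8 : m ≤ 8/9 := by
    rw [hm_def, div_le_div_iff₀ (by positivity) (by norm_num)]
    linarith
  have h1m : (0:ℝ) < 1 - m := by linarith
  -- the tilt parameter
  set t : ℝ := Real.log (m / (8 * (1 - m))) with ht_def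
  have hfrac_pos : (0:ℝ) < m / (8 * (1 - m)) := by positivity
  have hfrac_le1 : m / (8 * (1 - m)) ≤ 1 := by
    rw [div_le_one (by positivity)]; linarith
  have ht : t ≤ 0 := Real.log_nonpos hfrac_pos.le hfrac_le1
  have hexpt : Real.exp t = m / (8 * (1 - m)) := Real.exp_log hfrac_pos
  have hexpt1 : Real.exp t ≤ 1 := Real.exp_le_one_iff.mpr ht
  -- the Bernoulli indicators
  set φfun : EuclideanSpace ℝ (Fin s) → ℝ :=
    fun x => if ‖x - μvec‖ ≤ b then 1 else 0 with hφ_def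
  have hφmeas : Measurable φfun := by
    refine Measurable.ite ?_ measurable_const measurable_const
    exact measurableSet_le ((continuous_id.sub continuous_const).norm).measurable
      measurable_const
  set η : Fin N → Ω → ℝ := fun j => φfun ∘ g j with hη_def
  have hηmeas : ∀ j, Measurable (η j) := fun j => hφmeas.comp (hmeas j)
  have hηindep : iIndepFun η P :=
    hindep.comp (fun _ => φfun) (fun _ => hφmeas)
  have hη01 : ∀ j ω, η j ω = 0 ∨ η j ω = 1 := by
    intro j ω
    simp only [hη_def, hφ_def, Function.comp_apply]
    split <;> simp
  have hηint : ∀ j, Integrable (fun ω => Real.exp (t * η j ω)) P := by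
    intro j
    refine Integrable.mono' (integrable_const 1)
      (((hηmeas j).const_mul t).exp.aestronglyMeasurable) (ae_of_all _ fun ω => ?_)
    rw [Real.norm_eq_abs, abs_of_nonneg (Real.exp_pos _).le]
    refine Real.exp_le_one_iff.mpr ?_
    rcases hη01 j ω with h | h <;> rw [h] <;> nlinarith
  -- measurable sets S j
  have hSmeas : ∀ j, MeasurableSet {ω | ‖g j ω - μvec‖ ≤ b} := fun j =>
    measurableSet_le (((hmeas j).sub measurable_const).norm) measurable_const
  -- probability of each S j
  have hpj : ∀ j, (8:ℝ)/9 ≤ (P {ω | ‖g j ω - μvec‖ ≤ b}).toReal := by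
    intro j
    have hcompl : {ω | ‖g j ω - μvec‖ ≤ b}ᶜ = {ω | b < ‖g j ω - μvec‖} := by
      ext ω; simp [not_le]
    have h19 : (P {ω | ‖g j ω - μvec‖ ≤ b}ᶜ).toReal ≤ 1/9 := by
      rw [hcompl]
      exact ENNReal.toReal_le_of_le_ofReal (by norm_num) (heach j)
    have hsum := prob_add_prob_compl (μ := P) (hSmeas j)
    have := congrArg ENNReal.toReal hsum
    rw [ENNReal.toReal_add (measure_ne_top _ _) (measure_ne_top _ _)] at this
    simp only [ENNReal.toReal_one] at this
    linarith
  -- mgf of each η j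
  set c0 : ℝ := 1 / (9 * (1 - m)) with hc0_def
  have hc0pos : 0 < c0 := by positivity
  have hmgf_le : ∀ j, mgf (η j) P t ≤ c0 := by
    intro j
    have heq : (fun ω => Real.exp (t * η j ω)) =
        fun ω => {ω | ‖g j ω - μvec‖ ≤ b}.indicator
          (fun _ => Real.exp t - 1) ω + 1 := by
      funext ω
      rw [Set.indicator_apply]
      by_cases hω : ω ∈ {ω | ‖g j ω - μvec‖ ≤ b}
      · rw [if_pos hω]
        have hω' : ‖g j ω - μvec‖ ≤ b := hω
        have : η j ω = 1 := by simp [hη_def, hφ_def, hω']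
        rw [this, mul_one]; ring
      · rw [if_neg hω]
        have hω' : ¬ ‖g j ω - μvec‖ ≤ b := hω
        have : η j ω = 0 := by simp [hη_def, hφ_def, hω']
        rw [this, mul_zero, Real.exp_zero]; ring
    have hmgf_eq : mgf (η j) P t
        = (Real.exp t - 1) * (P {ω | ‖g j ω - μvec‖ ≤ b}).toReal + 1 := by
      rw [mgf, heq]
      rw [integral_add ((integrable_const _).indicator (hSmeas j)) (integrable_const 1)]
      rw [integral_indicator_const _ (hSmeas j)]
      simp [mul_comm, Measure.real]
    rw [hmgf_eq]
    have hle : (Real.exp t - 1) * (P {ω | ‖g j ω - μvec‖ ≤ b}).toReal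
        ≤ (Real.exp t - 1) * (8/9) :=
      mul_le_mul_of_nonpos_left (hpj j) (by linarith)
    have hc0eq : c0 = 1 + (Real.exp t - 1) * (8/9) := by
      rw [hc0_def, hexpt]
      field_simp
      ring
    rw [hc0eq]
    linarith
  -- Chernoff bound
  set X : Ω → ℝ := ∑ i ∈ Finset.univ, η i with hX_def
  have hint_sum : Integrable (fun ω => Real.exp (t * X ω)) P :=
    hηindep.integrable_exp_mul_sum hηmeas (fun i _ => hηint i)
  have chern := measure_le_le_exp_mul_mgf (μ := P) (X := X) ((M:ℝ)/2) ht hint_sum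
  have hmgf_sum : mgf X P t = ∏ j, mgf (η j) P t := hηindep.mgf_sum hηmeas Finset.univ
  have hprod_le : ∏ j : Fin N, mgf (η j) P t ≤ c0 ^ N := by
    calc ∏ j : Fin N, mgf (η j) P t ≤ ∏ _j : Fin N, c0 :=
          Finset.prod_le_prod (fun i _ => mgf_nonneg) (fun i _ => hmgf_le i)
      _ = c0 ^ N := by rw [Finset.prod_const, Finset.card_univ, Fintype.card_fin]
  -- the analytic bound
  have hM2 : (M:ℝ)/2 = (N:ℝ) * m := by rw [hm_def]; field_simp
  have hexp_bound : Real.exp (-t * ((M:ℝ)/2)) * c0 ^ N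
      ≤ Real.exp (-2 * N * (8/9 - m)^2) := by
    have hc0exp : c0 ^ N = Real.exp ((N:ℝ) * Real.log c0) := by
      rw [Real.exp_nat_mul, Real.exp_log hc0pos]
    rw [hc0exp, ← Real.exp_add]
    apply Real.exp_le_exp.mpr
    have hlogt : t = Real.log m - Real.log (8 * (1 - m)) :=
      Real.log_div hm.ne' (by positivity)
    have hlogc0 : Real.log c0 = -(Real.log 9 + Real.log (1 - m)) := by
      rw [hc0_def, one_div, Real.log_inv, Real.log_mul (by norm_num) h1m.ne']
    have key := key_entropy_ineq hm hm8
    rw [hM2, hlogt, hlogc0]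
    nlinarith [mul_nonneg hNpos.le key]
  -- union bound assembly
  set A : Set Ω := {ω | a < ‖(N : ℝ)⁻¹ • (∑ j : Fin N, g j ω) - μvec‖} with hA_def
  set B : Set Ω := {ω | X ω ≤ (M:ℝ)/2} with hB_def
  have hsum_eq : ∀ ω, X ω =
      (Set.ncard {j : Fin N | ‖g j ω - μvec‖ ≤ b} : ℝ) := by
    intro ω
    rw [hX_def, Finset.sum_apply]
    have hset : {j : Fin N | ‖g j ω - μvec‖ ≤ b}
        = ↑(Finset.univ.filter (fun j => ‖g j ω - μvec‖ ≤ b)) := by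
      ext j
      simp only [Set.mem_setOf_eq, Finset.coe_filter, Finset.mem_univ, true_and]
    have h1 : ∑ j : Fin N, η j ω
        = ∑ j : Fin N, if ‖g j ω - μvec‖ ≤ b then (1:ℝ) else 0 := by
      apply Finset.sum_congr rfl
      intro j _
      simp [hη_def, hφ_def]
    rw [h1, Finset.sum_boole, hset, Set.ncard_coe_finset]
  have hsub : {ω | ((Set.ncard {j : Fin N | ‖g j ω - (N : ℝ)⁻¹ • (∑ i : Fin N, g i ω)‖ ≤ a + b} : ℝ)
        < (M : ℝ) / 2)} ⊆ A ∪ B := by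
    intro ω hω
    by_cases hA' : a < ‖(N : ℝ)⁻¹ • (∑ j : Fin N, g j ω) - μvec‖
    · exact Or.inl hA'
    · right
      have hle : ‖(N : ℝ)⁻¹ • (∑ j : Fin N, g j ω) - μvec‖ ≤ a := not_lt.mp hA'
      have hsubset : {j : Fin N | ‖g j ω - μvec‖ ≤ b}
          ⊆ {j : Fin N | ‖g j ω - (N : ℝ)⁻¹ • (∑ i : Fin N, g i ω)‖ ≤ a + b} := by
        intro j hj
        simp only [Set.mem_setOf_eq] at hj ⊢
        calc ‖g j ω - (N : ℝ)⁻¹ • (∑ i : Fin N, g i ω)‖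
            ≤ ‖g j ω - μvec‖ + ‖μvec - (N : ℝ)⁻¹ • (∑ i : Fin N, g i ω)‖ :=
              norm_sub_le_norm_sub_add_norm_sub _ _ _
          _ = ‖g j ω - μvec‖ + ‖(N : ℝ)⁻¹ • (∑ i : Fin N, g i ω) - μvec‖ := by
              rw [norm_sub_rev μvec]
          _ ≤ b + a := add_le_add hj hle
          _ = a + b := by ring
      have hcard : Set.ncard {j : Fin N | ‖g j ω - μvec‖ ≤ b}
          ≤ Set.ncard {j : Fin N | ‖g j ω - (N : ℝ)⁻¹ • (∑ i : Fin N, g i ω)‖ ≤ a + b} :=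
        Set.ncard_le_ncard hsubset (Set.toFinite _)
      show X ω ≤ (M:ℝ)/2
      rw [hsum_eq ω]
      have := hω
      simp only [Set.mem_setOf_eq] at this
      calc (Set.ncard {j : Fin N | ‖g j ω - μvec‖ ≤ b} : ℝ)
          ≤ (Set.ncard {j : Fin N | ‖g j ω - (N : ℝ)⁻¹ • (∑ i : Fin N, g i ω)‖ ≤ a + b} : ℝ) := by
            exact_mod_cast hcard
        _ ≤ (M:ℝ)/2 := this.le
  have hPB : P B ≤ ENNReal.ofReal (Real.exp (-2 * N * (8/9 - m)^2)) := by
    rw [← ENNReal.ofReal_toReal (measure_ne_top P B)]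
    apply ENNReal.ofReal_le_ofReal
    calc (P B).toReal ≤ Real.exp (-t * ((M:ℝ)/2)) * mgf X P t := chern
      _ ≤ Real.exp (-t * ((M:ℝ)/2)) * c0 ^ N := by
          rw [hmgf_sum]
          exact mul_le_mul_of_nonneg_left hprod_le (Real.exp_pos _).le
      _ ≤ Real.exp (-2 * N * (8/9 - m)^2) := hexp_bound
  calc P {ω | ((Set.ncard {j : Fin N | ‖g j ω - (N : ℝ)⁻¹ • (∑ i : Fin N, g i ω)‖ ≤ a + b} : ℝ)
        < (M : ℝ) / 2)} ≤ P (A ∪ B) := measure_mono hsub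
    _ ≤ P A + P B := measure_union_le A B
    _ ≤ ENNReal.ofReal p₀ + ENNReal.ofReal (Real.exp (-2 * N * (8/9 - m)^2)) :=
        add_le_add hbar hPB
    _ = ENNReal.ofReal (p₀ + Real.exp (-2 * N * (8/9 - m)^2)) :=
        (ENNReal.ofReal_add hp₀.le (Real.exp_pos _).le).symm
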